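/- Let G be an MCR game such that Val_G(v) ≠ +∞ for every vertex v, and let G' be the mean-payoff game played on the same weighted graph. Then for every vertex v, Val_G(v) = −∞ if and only if Val_{G'}(v) < 0. -/

import Mathlib

open Filter

/-- A two-player turn-based weighted game graph. `owner v = true` means that
vertex `v` belongs to player Max, `owner v = false` that it belongs to player Min.
Every vertex has at least one successor. -/
structure Game (V : Type) where
  owner : V → Bool
  E : V → V → Prop
  nonempty : ∀ v, ∃ v', E v v'
  w : V → V → ℤ

namespace Game

variable {V : Type}

/-- The (reversed) history of the first `k` vertices of `π` (most recent first). -/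
def hist (π : ℕ → V) (k : ℕ) : List V := (List.ofFn fun i : Fin k => π i).reverse

/-- A strategy: given the (reversed) list of previously visited vertices and the current
vertex, it picks a successor of the current vertex. -/
structure Strategy (g : Game V) where
  next : List V → V → V
  valid : ∀ h v, g.E v (next h v)

/-- A memoryless strategy only depends on the current vertex. -/
def Strategy.Memoryless {g : Game V} (s : g.Strategy) : Prop :=
  ∀ h h' v, s.next h v = s.next h' v

/-- A finite-memory strategy is one encoded by a deterministic Moore machine
`⟨M, m0, up, dec⟩`: the choice after a finite play is `dec` applied to the memory state
reached by reading the play (the initial vertex is not read) and to the last vertex. -/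
def Strategy.FiniteMemory {g : Game V} (s : g.Strategy) : Prop :=
  ∃ (M : Type) (_ : Fintype M) (m0 : M) (up : M → V → M) (dec : M → V → V),
    ∀ h v, s.next h v = dec (List.foldl up m0 (((h.reverse ++ [v]).drop 1))) v

variable (g : Game V)

/-- Next vertex chosen by the owner of the current vertex. -/
def step (σ τ : g.Strategy) (h : List V) (v : V) : V :=
  if g.owner v then σ.next h v else τ.next h v

/-- Current vertex and reversed history after `k` steps of the play `Play(v, σ, τ)`. -/
def playAux (σ τ : g.Strategy) (v : V) : ℕ → V × List V
  | 0 => (v, [])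
  | k+1 =>
      let p := playAux σ τ v k
      (g.step σ τ p.2 p.1, p.1 :: p.2)

/-- `Play(v, σ, τ)`: the unique play starting in `v` and conforming to the
strategy `σ` of Max and the strategy `τ` of Min. -/
def play (σ τ : g.Strategy) (v : V) (k : ℕ) : V := (g.playAux σ τ v k).1

/-- An infinite sequence of vertices is a play when consecutive vertices are linked
by edges. -/
def IsPlay (π : ℕ → V) : Prop := ∀ k, g.E (π k) (π (k+1))

/-- A play conforms to a strategy `s` of the player `p` if, whenever the current vertex
belongs to `p`, the next vertex is the one prescribed by `s`. -/
def Conforms (p : Bool) (s : g.Strategy) (π : ℕ → V) : Prop :=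
  ∀ k, g.owner (π k) = p → π (k+1) = s.next (hist π k) (π k)

/-- Total-payoff of the prefix of length `k`: the sum of the first `k` edge weights. -/
def TPfin (π : ℕ → V) (k : ℕ) : ℤ := ∑ i ∈ Finset.range k, g.w (π i) (π (i+1))

/-- Total payoff of an infinite play: `liminf` of the payoffs of its prefixes. -/
noncomputable def TP (π : ℕ → V) : EReal :=
  liminf (fun k => (((g.TPfin π k : ℤ) : ℝ) : EReal)) atTop

/-- Mean payoff of an infinite play. -/
noncomputable def MP (π : ℕ → V) : EReal :=
  liminf (fun k => ((((g.TPfin π k : ℤ) : ℝ) / (k : ℝ)) : EReal)) atTop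

open Classical in
/-- Min-cost reachability payoff with target `t`: total payoff up to the first visit
of `t`, and `+∞` if `t` is never visited. -/
noncomputable def MCR (t : V) (π : ℕ → V) : EReal :=
  if h : ∃ k, π k = t then (((g.TPfin π (Nat.find h) : ℤ) : ℝ) : EReal) else ⊤

open Classical in
/-- `MCR` payoff restricted to reaching the target among the first `i+1` vertices. -/
noncomputable def MCRbd (t : V) (i : ℕ) (π : ℕ → V) : EReal :=
  if ∃ k ≤ i, π k = t then g.MCR t π else ⊤

/-- Value of a strategy `σ` of Max from `v` : `inf_τ P(Play(v, σ, τ))`. -/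
noncomputable def valMax (P : (ℕ → V) → EReal) (v : V) (σ : g.Strategy) : EReal :=
  ⨅ τ : g.Strategy, P (g.play σ τ v)

/-- Value of a strategy `τ` of Min from `v` : `sup_σ P(Play(v, σ, τ))`. -/
noncomputable def valMin (P : (ℕ → V) → EReal) (v : V) (τ : g.Strategy) : EReal :=
  ⨆ σ : g.Strategy, P (g.play σ τ v)

/-- Lower value `Val⁻(v) = sup_σ inf_τ P(Play(v, σ, τ))`. -/
noncomputable def lowerVal (P : (ℕ → V) → EReal) (v : V) : EReal :=
  ⨆ σ : g.Strategy, g.valMax P v σ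

/-- Upper value `Val⁺(v) = inf_τ sup_σ P(Play(v, σ, τ))`. -/
noncomputable def upperVal (P : (ℕ → V) → EReal) (v : V) : EReal :=
  ⨅ τ : g.Strategy, g.valMin P v τ

end Game

/-- A min-cost reachability game: a game together with a target vertex `t` whose only
outgoing edge is a self-loop of weight `0`. -/
structure MCRGame (V : Type) extends Game V where
  t : V
  loop : E t t
  loopOnly : ∀ v, E t v → v = t
  loopZero : w t t = 0

/-- The value of a (determined) MCR game. -/
noncomputable def MCRGame.Val {V : Type} (G : MCRGame V) : V → EReal :=
  fun v => G.toGame.lowerVal (G.toGame.MCR G.t) v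

/-- The `i`-step value `val_i(v) = inf_τ sup_σ MCR_i(Play(v, σ, τ))`. -/
noncomputable def MCRGame.ival {V : Type} (G : MCRGame V) (i : ℕ) : V → EReal :=
  fun v => G.toGame.upperVal (G.toGame.MCRbd G.t i) v

namespace S3

open Game

variable {V : Type} (g : Game V)

lemma hist_length (π : ℕ → V) (k : ℕ) : (Game.hist π k).length = k := by
  simp [Game.hist]

lemma hist_zero (π : ℕ → V) : Game.hist π 0 = [] := by simp [Game.hist]

lemma hist_succ (π : ℕ → V) (k : ℕ) : Game.hist π (k+1) = π k :: Game.hist π k := by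
  unfold Game.hist
  rw [List.ofFn_succ']
  rw [List.concat_eq_append, List.reverse_append]
  simp

lemma hist_congr {π π' : ℕ → V} (k : ℕ) (h : ∀ i < k, π i = π' i) :
    Game.hist π k = Game.hist π' k := by
  unfold Game.hist
  congr 1
  exact congrArg List.ofFn (funext fun i => h i i.isLt)

lemma hist_add (π : ℕ → V) (k l : ℕ) :
    Game.hist π (k + l) = Game.hist (fun i => π (k + i)) l ++ Game.hist π k := by
  unfold Game.hist
  rw [List.ofFn_add, List.reverse_append]
  congr 1

lemma hist_one (π : ℕ → V) : Game.hist π 1 = [π 0] := by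
  rw [hist_succ, hist_zero]

lemma playAux_snd (σ τ : g.Strategy) (v : V) (k : ℕ) :
    (g.playAux σ τ v k).2 = Game.hist (g.play σ τ v) k := by
  induction k with
  | zero => simp [Game.playAux, hist_zero]
  | succ k ih =>
      rw [hist_succ]
      show (g.playAux σ τ v k).1 :: (g.playAux σ τ v k).2 = _
      rw [ih]; rfl

lemma play_zero (σ τ : g.Strategy) (v : V) : g.play σ τ v 0 = v := rfl

lemma play_succ (σ τ : g.Strategy) (v : V) (k : ℕ) :
    g.play σ τ v (k+1) =
      g.step σ τ (Game.hist (g.play σ τ v) k) (g.play σ τ v k) := by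
  rw [← playAux_snd]; rfl

lemma play_isPlay (σ τ : g.Strategy) (v : V) : g.IsPlay (g.play σ τ v) := by
  intro k
  rw [play_succ]
  unfold Game.step
  split
  · exact σ.valid _ _
  · exact τ.valid _ _

lemma play_conf_max (σ τ : g.Strategy) (v : V) (k : ℕ)
    (h : g.owner (g.play σ τ v k) = true) :
    g.play σ τ v (k+1) = σ.next (Game.hist (g.play σ τ v) k) (g.play σ τ v k) := by
  rw [play_succ]; unfold Game.step; rw [if_pos h]

lemma play_conf_min (σ τ : g.Strategy) (v : V) (k : ℕ)
    (h : g.owner (g.play σ τ v k) = false) :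
    g.play σ τ v (k+1) = τ.next (Game.hist (g.play σ τ v) k) (g.play σ τ v k) := by
  rw [play_succ]; unfold Game.step
  rw [if_neg (by simp [h])]

lemma TPfin_zero (π : ℕ → V) : g.TPfin π 0 = 0 := by simp [Game.TPfin]

lemma TPfin_succ (π : ℕ → V) (k : ℕ) :
    g.TPfin π (k+1) = g.TPfin π k + g.w (π k) (π (k+1)) := by
  unfold Game.TPfin
  rw [Finset.sum_range_succ]

lemma TPfin_add (π : ℕ → V) (k l : ℕ) :
    g.TPfin π (k + l) = g.TPfin π k + g.TPfin (fun i => π (k + i)) l := by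
  unfold Game.TPfin
  rw [Finset.sum_range_add]
  refine congrArg (g.TPfin π k + ·) (Finset.sum_congr rfl (fun i _ => ?_))
  rw [show k + i + 1 = k + (i + 1) from by omega]

lemma TPfin_congr {π π' : ℕ → V} {k : ℕ} (h : ∀ i ≤ k, π i = π' i) :
    g.TPfin π k = g.TPfin π' k := by
  unfold Game.TPfin
  refine Finset.sum_congr rfl (fun i hi => ?_)
  rw [Finset.mem_range] at hi
  rw [h i (by omega), h (i+1) (by omega)]

/-- A fallback successor for each vertex. -/
noncomputable def fallback (u : V) : V := (g.nonempty u).choose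

lemma fallback_valid (u : V) : g.E u (fallback g u) := (g.nonempty u).choose_spec

/-- Conformance of a finite path (of length `k`) with a strategy of Max. -/
def CF (σ : g.Strategy) (p : ℕ → V) (k : ℕ) : Prop :=
  ∀ j < k, g.owner (p j) = true → p (j+1) = σ.next (Game.hist p j) (p j)

/-- Residual strategy after a (reversed) history `H`. -/
def resid (σ : g.Strategy) (H : List V) : g.Strategy :=
  ⟨fun h u => σ.next (h ++ H) u, fun h u => σ.valid _ u⟩

open Classical in
/-- A Min strategy that follows a given infinite play `π`. -/
noncomputable def mimic (π : ℕ → V) : g.Strategy :=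
  ⟨fun h u => if u = π h.length ∧ h = Game.hist π h.length ∧ g.E u (π (h.length + 1))
      then π (h.length+1) else fallback g u,
   by
    intro h u
    split
    · next hc => exact hc.1 ▸ hc.2.2
    · exact fallback_valid g u⟩

lemma mimic_next (π : ℕ → V) (k : ℕ) (he : g.E (π k) (π (k+1))) :
    (mimic g π).next (Game.hist π k) (π k) = π (k+1) := by
  have hl := hist_length π k
  unfold mimic
  dsimp only
  rw [hl]
  rw [if_pos ⟨rfl, rfl, he⟩]

lemma mimic_play (σ : g.Strategy) (π : ℕ → V) (hp : g.IsPlay π)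
    (hc : g.Conforms true σ π) (k : ℕ) :
    g.play σ (mimic g π) (π 0) k = π k := by
  induction k using Nat.strong_induction_on with
  | _ k IH =>
    match k with
    | 0 => rfl
    | (k+1) =>
      have hcur : g.play σ (mimic g π) (π 0) k = π k := IH k (by omega)
      have hhist : Game.hist (g.play σ (mimic g π) (π 0)) k = Game.hist π k :=
        hist_congr k (fun i hi => IH i (by omega))
      rw [play_succ, hhist, hcur]
      unfold Game.step
      by_cases how : g.owner (π k) = true
      · rw [if_pos how]
        exact (hc k how).symm
      · rw [if_neg how]
        exact mimic_next g π k (hp k)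

lemma absorb {t : V} (π : ℕ → V) (hp : g.IsPlay π) (ht : ∀ u, g.E t u → u = t)
    {j : ℕ} (hj : π j = t) : ∀ i, j ≤ i → π i = t := by
  intro i hi
  induction i, hi using Nat.le_induction with
  | base => exact hj
  | succ i hji ih => exact ht _ (ih ▸ hp i)

lemma TPfin_absorb {t : V} (π : ℕ → V) (hp : g.IsPlay π) (ht : ∀ u, g.E t u → u = t)
    (hw : g.w t t = 0) {j : ℕ} (hj : π j = t) :
    ∀ i, j ≤ i → g.TPfin π i = g.TPfin π j := by
  intro i hi
  obtain ⟨d, rfl⟩ : ∃ d, i = j + d := ⟨i - j, by omega⟩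
  rw [TPfin_add]
  have : g.TPfin (fun i => π (j + i)) d = 0 := by
    unfold Game.TPfin
    refine Finset.sum_eq_zero (fun i _ => ?_)
    have h1 : π (j + i) = t := absorb g π hp ht hj _ (by omega)
    have h2 : π (j + (i+1)) = t := absorb g π hp ht hj _ (by omega)
    simp only []
    rw [h1, h2, hw]
  rw [this, add_zero]

end S3
namespace S3

section Iter

variable {V : Type} (g : Game V) [Fintype V]

open Classical in
noncomputable def succs (u : V) : Finset V := Finset.univ.filter (fun u' => g.E u u')

open Classical in
lemma mem_succs {u u' : V} : u' ∈ succs g u ↔ g.E u u' := by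
  simp [succs]

lemma succs_nonempty (u : V) : (succs g u).Nonempty := by
  obtain ⟨u', h⟩ := g.nonempty u
  exact ⟨u', (mem_succs g).2 h⟩

open Classical in
noncomputable def succsIn (T : Set V) (u : V) : Finset V :=
  Finset.univ.filter (fun u' => g.E u u' ∧ u' ∈ T)

open Classical in
lemma mem_succsIn {T : Set V} {u u' : V} : u' ∈ succsIn g T u ↔ g.E u u' ∧ u' ∈ T := by
  simp [succsIn]

def clipSub (a : ℕ) (w : ℤ) : ℕ := ((a:ℤ) - w).toNat

lemma clipSub_mono {a b : ℕ} (w : ℤ) (h : a ≤ b) : clipSub a w ≤ clipSub b w := by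
  unfold clipSub; omega

lemma clipSub_add_le (a C : ℕ) (w : ℤ) : clipSub (a + C) w ≤ clipSub a w + C := by
  unfold clipSub; omega

lemma lt_clipSub_iff {B a : ℕ} {w : ℤ} : B < clipSub a w ↔ (B:ℤ) < (a:ℤ) - w := by
  unfold clipSub; omega

lemma clipSub_le_iff {a B : ℕ} {w : ℤ} : clipSub a w ≤ B ↔ (a:ℤ) - w ≤ B := by
  unfold clipSub; omega

lemma clipSub_le_abs {a W : ℕ} {w : ℤ} (hw : w.natAbs ≤ W) : clipSub a w ≤ a + W := by
  unfold clipSub; omega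

/-- Energy value iteration, where Min is restricted to successors in `T`. -/
noncomputable def fT (T : Set V) : ℕ → V → ℕ
  | 0, _ => 0
  | (i+1), u =>
      if g.owner u then
        (succs g u).inf' (succs_nonempty g u) (fun u' => clipSub (fT T i u') (g.w u u'))
      else
        (succsIn g T u).sup (fun u' => clipSub (fT T i u') (g.w u u'))

lemma fT_zero (T : Set V) (u : V) : fT g T 0 u = 0 := rfl

lemma fT_succ_max (T : Set V) (i : ℕ) {u : V} (h : g.owner u = true) :
    fT g T (i+1) u =
      (succs g u).inf' (succs_nonempty g u) (fun u' => clipSub (fT g T i u') (g.w u u')) := by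
  rw [fT, if_pos h]

lemma fT_succ_min (T : Set V) (i : ℕ) {u : V} (h : g.owner u = false) :
    fT g T (i+1) u =
      (succsIn g T u).sup (fun u' => clipSub (fT g T i u') (g.w u u')) := by
  rw [fT, if_neg (by simp [h])]

lemma fT_mono_succ (T : Set V) : ∀ i u, fT g T i u ≤ fT g T (i+1) u := by
  intro i
  induction i with
  | zero => intro u; exact Nat.zero_le _
  | succ i ih =>
      intro u
      by_cases h : g.owner u = true
      · rw [fT_succ_max g T i h, fT_succ_max g T (i+1) h]
        exact Finset.le_inf' _ _ (fun b hb =>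
          le_trans (Finset.inf'_le _ hb) (clipSub_mono _ (ih b)))
      · rw [fT_succ_min g T i (by simpa using h), fT_succ_min g T (i+1) (by simpa using h)]
        exact Finset.sup_mono_fun (fun u' _ => clipSub_mono _ (ih u'))

lemma fT_mono (T : Set V) (u : V) {i j : ℕ} (h : i ≤ j) : fT g T i u ≤ fT g T j u := by
  induction j, h using Nat.le_induction with
  | base => exact le_rfl
  | succ j hj ih => exact ih.trans (fT_mono_succ g T j u)

/-- Bound on the absolute values of weights. -/
noncomputable def Wb : ℕ :=
  (Finite.exists_le (fun p : V × V => (g.w p.1 p.2).natAbs)).choose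

lemma Wb_spec (u u' : V) : (g.w u u').natAbs ≤ Wb g :=
  (Finite.exists_le (fun p : V × V => (g.w p.1 p.2).natAbs)).choose_spec (u, u')

/-- The set of vertices where the energy iteration diverges. -/
def Sinf : Set V := {u | ∀ b : ℕ, ∃ i, b < fT g Set.univ i u}

lemma maxClosed {u u' : V} (hu : u ∈ Sinf g) (how : g.owner u = true)
    (he : g.E u u') : u' ∈ Sinf g := by
  intro b
  obtain ⟨i, hi⟩ := hu (b + Wb g)
  match i with
  | 0 => simp [fT_zero] at hi
  | (i+1) =>
      rw [fT_succ_max g _ i how] at hi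
      have h2 : b + Wb g < clipSub (fT g Set.univ i u') (g.w u u') :=
        lt_of_lt_of_le hi (Finset.inf'_le _ ((mem_succs g).2 he))
      rw [lt_clipSub_iff] at h2
      have hw := Wb_spec g u u'
      have hw2 : -(Wb g : ℤ) ≤ g.w u u' := by omega
      refine ⟨i, ?_⟩
      omega

lemma exists_bddAll : ∃ B₁ : ℕ, ∀ u, u ∉ Sinf g → ∀ i, fT g Set.univ i u ≤ B₁ := by
  have h : ∀ u : V, ∃ b, u ∉ Sinf g → ∀ i, fT g Set.univ i u ≤ b := by
    intro u
    by_cases hu : u ∈ Sinf g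
    · exact ⟨0, fun h => absurd hu h⟩
    · simp only [Sinf, Set.mem_setOf_eq] at hu
      push_neg at hu
      obtain ⟨b, hb⟩ := hu
      exact ⟨b, fun _ i => hb i⟩
  choose bnd hbnd using h
  obtain ⟨B₁, hB₁⟩ := Finite.exists_le bnd
  exact ⟨B₁, fun u hu i => (hbnd u hu i).trans (hB₁ u)⟩

lemma compare (B₁ : ℕ) (hB₁ : ∀ u, u ∉ Sinf g → ∀ i, fT g Set.univ i u ≤ B₁) :
    ∀ i u, u ∈ Sinf g →
      fT g Set.univ i u ≤ fT g (Sinf g) i u + (B₁ + Wb g) := by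
  intro i
  induction i with
  | zero => intro u _; simp [fT_zero]
  | succ i ih =>
      intro u hu
      by_cases how : g.owner u = true
      · rw [fT_succ_max g _ i how, fT_succ_max g _ i how]
        obtain ⟨u'₀, hmem, heq⟩ := Finset.exists_mem_eq_inf' (succs_nonempty g u)
          (fun u' => clipSub (fT g (Sinf g) i u') (g.w u u'))
        rw [heq]
        have hS : u'₀ ∈ Sinf g := maxClosed g hu how ((mem_succs g).1 hmem)
        calc (succs g u).inf' (succs_nonempty g u)
              (fun u' => clipSub (fT g Set.univ i u') (g.w u u'))
            ≤ clipSub (fT g Set.univ i u'₀) (g.w u u'₀) := Finset.inf'_le _ hmem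
          _ ≤ clipSub (fT g (Sinf g) i u'₀ + (B₁ + Wb g)) (g.w u u'₀) :=
              clipSub_mono _ (ih u'₀ hS)
          _ ≤ clipSub (fT g (Sinf g) i u'₀) (g.w u u'₀) + (B₁ + Wb g) :=
              clipSub_add_le _ _ _
      · have how' : g.owner u = false := by simpa using how
        rw [fT_succ_min g _ i how', fT_succ_min g _ i how']
        refine Finset.sup_le (fun u' hmem => ?_)
        have he : g.E u u' := ((mem_succsIn g).1 hmem).1
        by_cases hS : u' ∈ Sinf g
        · calc clipSub (fT g Set.univ i u') (g.w u u')
              ≤ clipSub (fT g (Sinf g) i u' + (B₁ + Wb g)) (g.w u u') :=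
                clipSub_mono _ (ih u' hS)
            _ ≤ clipSub (fT g (Sinf g) i u') (g.w u u') + (B₁ + Wb g) :=
                clipSub_add_le _ _ _
            _ ≤ (succsIn g (Sinf g) u).sup
                  (fun u' => clipSub (fT g (Sinf g) i u') (g.w u u')) + (B₁ + Wb g) := by
                refine Nat.add_le_add_right ?_ _
                exact Finset.le_sup (f := fun u' => clipSub (fT g (Sinf g) i u') (g.w u u'))
                  ((mem_succsIn g).2 ⟨he, hS⟩)
        · calc clipSub (fT g Set.univ i u') (g.w u u')
              ≤ fT g Set.univ i u' + Wb g := clipSub_le_abs (Wb_spec g u u')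
            _ ≤ B₁ + Wb g := Nat.add_le_add_right (hB₁ u' hS i) _
            _ ≤ _ := Nat.le_add_left _ _

lemma Sinf_unbdd_S {u : V} (hu : u ∈ Sinf g) : ∀ b : ℕ, ∃ i, b < fT g (Sinf g) i u := by
  obtain ⟨B₁, hB₁⟩ := exists_bddAll g
  intro b
  obtain ⟨i, hi⟩ := hu (b + (B₁ + Wb g))
  refine ⟨i, ?_⟩
  have := compare g B₁ hB₁ i u hu
  omega

/-- A monotone bounded sequence of naturals stabilizes. -/
lemma stab_of_bdd : ∀ (d : ℕ) (a : ℕ → ℕ), (∀ i j, i ≤ j → a i ≤ a j) →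
    (∀ i, a i ≤ a 0 + d) → ∃ N, ∀ i, N ≤ i → a i = a N := by
  intro d
  induction d with
  | zero =>
      intro a mono hb
      exact ⟨0, fun i hi => le_antisymm (hb i) (mono 0 i (Nat.zero_le i))⟩
  | succ d ih =>
      intro a mono hb
      by_cases h : ∃ m, a 0 < a m
      · obtain ⟨m, hm⟩ := h
        obtain ⟨N', hN'⟩ := ih (fun i => a (m + i))
          (fun i j hij => mono _ _ (by omega))
          (fun i => by show a (m + i) ≤ a m + d; have h1 := hb (m + i); omega)
        refine ⟨m + N', fun i hi => ?_⟩
        have h1 : a i = a (m + (i - m)) := by congr 1; omega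
        have h2 : a (m + (i - m)) = a (m + N') := hN' (i - m) (by omega)
        rw [h1, h2]
      · push_neg at h
        exact ⟨0, fun i _ => le_antisymm (h i) (mono 0 i (Nat.zero_le i))⟩

lemma exists_stabIdx : ∃ I : ℕ, ∀ u, u ∉ Sinf g → ∀ i, I ≤ i →
    fT g Set.univ i u = fT g Set.univ I u := by
  obtain ⟨B₁, hB₁⟩ := exists_bddAll g
  have h : ∀ u : V, ∃ N, u ∉ Sinf g → ∀ i, N ≤ i →
      fT g Set.univ i u = fT g Set.univ N u := by
    intro u
    by_cases hu : u ∈ Sinf g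
    · exact ⟨0, fun h => absurd hu h⟩
    · obtain ⟨N, hN⟩ := stab_of_bdd B₁ (fun i => fT g Set.univ i u)
        (fun i j hij => fT_mono g _ u hij)
        (fun i => by
          show fT g Set.univ i u ≤ fT g Set.univ 0 u + B₁
          rw [fT_zero]
          have := hB₁ u hu i; omega)
      exact ⟨N, fun _ => hN⟩
  choose N hN using h
  obtain ⟨I, hI⟩ := Finite.exists_le N
  refine ⟨I, fun u hu i hi => ?_⟩
  rw [hN u hu i (le_trans (hI u) hi), hN u hu I (hI u)]

noncomputable def Ist : ℕ := (exists_stabIdx g).choose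

lemma Ist_spec : ∀ u, u ∉ Sinf g → ∀ i, Ist g ≤ i →
    fT g Set.univ i u = fT g Set.univ (Ist g) u := (exists_stabIdx g).choose_spec

/-- The stabilized (finite) energy value on the bounded region. -/
noncomputable def Fv (u : V) : ℕ := fT g Set.univ (Ist g) u

lemma maxA {u : V} (hu : u ∉ Sinf g) (how : g.owner u = true) :
    ∃ u', g.E u u' ∧ u' ∉ Sinf g ∧ (Fv g u' : ℤ) ≤ Fv g u + g.w u u' := by
  by_contra hcon
  push_neg at hcon
  have key : ∀ u' : {x // x ∈ succs g u}, ∃ i₀, ∀ i, i₀ ≤ i →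
      (Fv g u : ℤ) < (fT g Set.univ i u' : ℤ) - g.w u u'.1 := by
    rintro ⟨u', hmem⟩
    have he : g.E u u' := (mem_succs g).1 hmem
    by_cases hS : u' ∈ Sinf g
    · obtain ⟨i₀, hi₀⟩ := hS (Fv g u + Wb g)
      refine ⟨i₀, fun i hi => ?_⟩
      have h1 : Fv g u + Wb g < fT g Set.univ i u' :=
        lt_of_lt_of_le hi₀ (fT_mono g _ u' hi)
      have hw : (g.w u u' : ℤ) ≤ Wb g := by have := Wb_spec g u u'; omega
      push_cast
      omega
    · have h1 : (Fv g u : ℤ) + g.w u u' < Fv g u' := by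
        have := hcon u' he hS; omega
      refine ⟨Ist g, fun i hi => ?_⟩
      rw [Ist_spec g u' hS i hi]
      show (Fv g u : ℤ) < (Fv g u' : ℤ) - g.w u u'
      omega
  choose idx hidx using key
  obtain ⟨i₁, hi₁⟩ := Finite.exists_le idx
  set i₂ := max i₁ (Ist g) with hi₂
  have hbig : Fv g u < fT g Set.univ (i₂+1) u := by
    rw [fT_succ_max g _ i₂ how]
    rw [Finset.lt_inf'_iff]
    intro u' hmem
    rw [lt_clipSub_iff]
    exact hidx ⟨u', hmem⟩ i₂ (le_trans (hi₁ ⟨u', hmem⟩) (le_max_left _ _))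
  rw [Ist_spec g u hu (i₂+1) (by omega)] at hbig
  have : fT g Set.univ (Ist g) u = Fv g u := rfl
  omega

lemma minA {u : V} (hu : u ∉ Sinf g) (how : g.owner u = false)
    {u' : V} (he : g.E u u') :
    u' ∉ Sinf g ∧ (Fv g u' : ℤ) ≤ Fv g u + g.w u u' := by
  have key : ∀ i, Ist g ≤ i → (fT g Set.univ i u' : ℤ) ≤ Fv g u + g.w u u' := by
    intro i hi
    have h1 : clipSub (fT g Set.univ i u') (g.w u u') ≤ fT g Set.univ (i+1) u := by
      rw [fT_succ_min g _ i how]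
      exact Finset.le_sup (f := fun u' => clipSub (fT g Set.univ i u') (g.w u u'))
        ((mem_succsIn g).2 ⟨he, Set.mem_univ u'⟩)
    rw [Ist_spec g u hu (i+1) (by omega)] at h1
    rw [clipSub_le_iff] at h1
    have : fT g Set.univ (Ist g) u = Fv g u := rfl
    omega
  have hbdd : u' ∉ Sinf g := by
    intro hS
    obtain ⟨i, hi⟩ := hS ((Fv g u : ℤ) + g.w u u').toNat
    have h2 := key (max i (Ist g)) (le_max_right _ _)
    have h3 : fT g Set.univ i u' ≤ fT g Set.univ (max i (Ist g)) u' :=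
      fT_mono g _ u' (le_max_left _ _)
    omega
  exact ⟨hbdd, by have := key (Ist g) le_rfl; exact this⟩

open Classical in
/-- Max's memoryless strategy securing bounded energy on the bounded region. -/
noncomputable def sigStar : g.Strategy :=
  ⟨fun _ u => if h : u ∉ Sinf g ∧ g.owner u = true then (maxA g h.1 h.2).choose
    else fallback g u,
   by
    intro h u
    split
    · next hc => exact (maxA g hc.1 hc.2).choose_spec.1
    · exact fallback_valid g u⟩

lemma sigStar_inv {v : V} (hv : v ∉ Sinf g) (τ : g.Strategy) :
    ∀ k, (g.play (sigStar g) τ v k ∉ Sinf g) ∧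
      (Fv g (g.play (sigStar g) τ v k) : ℤ) ≤ Fv g v + g.TPfin (g.play (sigStar g) τ v) k := by
  intro k
  induction k with
  | zero =>
      refine ⟨hv, ?_⟩
      have h0 : g.play (sigStar g) τ v 0 = v := rfl
      rw [h0, TPfin_zero]
      omega
  | succ k ih =>
      obtain ⟨hA, hF⟩ := ih
      have htp := TPfin_succ g (g.play (sigStar g) τ v) k
      by_cases how : g.owner (g.play (sigStar g) τ v k) = true
      · have hstep := play_conf_max g (sigStar g) τ v k how
        have : (sigStar g).next (Game.hist (g.play (sigStar g) τ v) k)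
            (g.play (sigStar g) τ v k) = (maxA g hA how).choose := by
          unfold sigStar
          dsimp only
          rw [dif_pos ⟨hA, how⟩]
        rw [this] at hstep
        obtain ⟨hE, hA', hF'⟩ := (maxA g hA how).choose_spec
        rw [hstep]
        refine ⟨hA', ?_⟩
        rw [htp, hstep]
        omega
      · have how' : g.owner (g.play (sigStar g) τ v k) = false := by simpa using how
        have hstep := play_conf_min g (sigStar g) τ v k how'
        have hE : g.E (g.play (sigStar g) τ v k) (g.play (sigStar g) τ v (k+1)) :=
          play_isPlay g (sigStar g) τ v k
        obtain ⟨hA', hF'⟩ := minA g hA how' hE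
        refine ⟨hA', ?_⟩
        rw [htp]
        omega

lemma sigStar_TPfin_lb {v : V} (hv : v ∉ Sinf g) (τ : g.Strategy) (k : ℕ) :
    -(Fv g v : ℤ) ≤ g.TPfin (g.play (sigStar g) τ v) k := by
  have h := (sigStar_inv g hv τ k).2
  have h0 : (0:ℤ) ≤ (Fv g (g.play (sigStar g) τ v k) : ℤ) := Int.ofNat_nonneg _
  omega

end Iter

end S3
namespace S3

section Cpl

variable {V : Type} (g : Game V) [Fintype V]

lemma cpl (T : Set V)
    (hMax : ∀ u, u ∈ T → g.owner u = true → ∀ u', g.E u u' → u' ∈ T) :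
    ∀ (i B : ℕ) (u : V), u ∈ T → ∀ σ : g.Strategy, B < fT g T i u →
      ∃ (k : ℕ) (p : ℕ → V), k ≤ i ∧ p 0 = u ∧
        (∀ j < k, g.E (p j) (p (j+1))) ∧ (∀ j ≤ k, p j ∈ T) ∧
        CF g σ p k ∧ g.TPfin p k < -(B:ℤ) := by
  intro i
  induction i with
  | zero => intro B u _ σ hB; rw [fT_zero] at hB; omega
  | succ i ih =>
      intro B u hT σ hB
      obtain ⟨u', he, hu'T, hclip, hconf⟩ :
          ∃ u', g.E u u' ∧ u' ∈ T ∧ B < clipSub (fT g T i u') (g.w u u') ∧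
            (g.owner u = true → u' = σ.next [] u) := by
        by_cases how : g.owner u = true
        · have hv := σ.valid [] u
          refine ⟨σ.next [] u, hv, hMax u hT how _ hv, ?_, fun _ => rfl⟩
          rw [fT_succ_max g T i how] at hB
          exact lt_of_lt_of_le hB (Finset.inf'_le _ ((mem_succs g).2 hv))
        · have how' : g.owner u = false := by simpa using how
          rw [fT_succ_min g T i how'] at hB
          obtain ⟨u', hmem, hlt⟩ := Finset.lt_sup_iff.1 hB
          obtain ⟨he, hu'T⟩ := (mem_succsIn g).1 hmem
          exact ⟨u', he, hu'T, hlt, fun hc => absurd hc (by simp [how'])⟩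
      rw [lt_clipSub_iff] at hclip
      by_cases hneg : (B:ℤ) + g.w u u' < 0
      · -- one step suffices
        refine ⟨1, fun n => if n = 0 then u else u', by omega, rfl, ?_, ?_, ?_, ?_⟩
        · intro j hj
          interval_cases j
          simpa using he
        · intro j hj
          interval_cases j
          · simpa using hT
          · simpa using hu'T
        · intro j hj how
          interval_cases j
          simp only [if_pos rfl] at how ⊢
          rw [hist_zero]
          simpa using hconf how
        · rw [TPfin_succ, TPfin_zero]
          simpa using by omega
      · set B' := ((B:ℤ) + g.w u u').toNat with hB'def
        have hB' : (B' : ℤ) = (B:ℤ) + g.w u u' := Int.toNat_of_nonneg (by omega)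
        have hlt' : B' < fT g T i u' := by
          have : (B' : ℤ) < (fT g T i u' : ℤ) := by omega
          exact_mod_cast this
        obtain ⟨k', q, hk', hq0, hqe, hqT, hqCF, hqTP⟩ :=
          ih B' u' hu'T (resid g σ [u]) hlt'
        refine ⟨k' + 1, fun n => match n with | 0 => u | (n+1) => q n,
          by omega, rfl, ?_, ?_, ?_, ?_⟩
        · intro j hj
          match j with
          | 0 => show g.E u (q 0); rw [hq0]; exact he
          | (j+1) => exact hqe j (by omega)
        · intro j hj
          match j with
          | 0 => exact hT
          | (j+1) => exact hqT j (by omega)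
        · intro j hj how
          match j with
          | 0 =>
              show q 0 = σ.next (Game.hist _ 0) u
              rw [hist_zero, hq0]
              exact hconf how
          | (j+1) =>
              show q (j+1) = σ.next (Game.hist (fun n => match n with | 0 => u | (n+1) => q n) (j+1)) (q j)
              have hh : Game.hist (fun n => match n with | 0 => u | (n+1) => q n) (j+1) =
                  Game.hist q j ++ [u] := by
                have h1 := hist_add (fun n => match n with | 0 => u | (n+1) => q n) 1 j
                rw [show j + 1 = 1 + j from by omega, h1]
                congr 1
                refine hist_congr j (fun i hi => ?_)
                show (match (1 + i : ℕ) with | 0 => u | (n+1) => q n) = q i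
                rw [show 1 + i = i + 1 from by omega]
              rw [hh]
              have := hqCF j (by omega) how
              rw [this]
              rfl
        · have h1 : g.TPfin (fun n => match n with | 0 => u | (n+1) => q n) (k' + 1) =
              g.w u (q 0) + g.TPfin q k' := by
            rw [show k' + 1 = 1 + k' from by omega, TPfin_add]
            have h2 : g.TPfin (fun n => match n with | 0 => u | (n+1) => q n) 1 =
                g.w u (q 0) := by
              rw [TPfin_succ, TPfin_zero]; simp
            rw [h2]
            congr 1
            refine TPfin_congr g (fun i hi => ?_)
            show (match (1 + i : ℕ) with | 0 => u | (n+1) => q n) = q i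
            rw [show 1 + i = i + 1 from by omega]
          rw [h1, hq0]
          omega

end Cpl

end S3
namespace S3

section Phases

open Filter

variable {V : Type} (g : Game V) [Fintype V]

lemma exists_m : ∃ m : ℕ, 1 ≤ m ∧ ∀ u ∈ Sinf g, 0 < fT g (Sinf g) m u := by
  have h : ∀ u : {x // x ∈ Sinf g}, ∃ i, 0 < fT g (Sinf g) i u.1 :=
    fun u => Sinf_unbdd_S g u.2 0
  choose idx hidx using h
  obtain ⟨m₀, hm₀⟩ := Finite.exists_le idx
  refine ⟨m₀ + 1, by omega, fun u hu => ?_⟩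
  exact lt_of_lt_of_le (hidx ⟨u, hu⟩) (fT_mono g _ u ((hm₀ ⟨u, hu⟩).trans (by omega)))

/-- Invariant for the phase construction. -/
def Good (m : ℕ) (σ : g.Strategy) (v : V) (j : ℕ) (st : ℕ × (ℕ → V)) : Prop :=
  st.2 0 = v ∧ (∀ i < st.1, g.E (st.2 i) (st.2 (i+1))) ∧
  (∀ i ≤ st.1, st.2 i ∈ Sinf g) ∧ CF g σ st.2 st.1 ∧
  g.TPfin st.2 st.1 ≤ -(j:ℤ) ∧ st.1 ≤ j * m ∧ j ≤ st.1

lemma phase_step (m : ℕ) (hm1 : 1 ≤ m) (hm : ∀ u ∈ Sinf g, 0 < fT g (Sinf g) m u)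
    (σ : g.Strategy) (v : V) (j : ℕ) (st : ℕ × (ℕ → V)) (hst : Good g m σ v j st) :
    ∃ st', Good g m σ v (j+1) st' ∧ st.1 < st'.1 ∧ ∀ i ≤ st.1, st'.2 i = st.2 i := by
  obtain ⟨hp0, hpe, hpT, hpCF, hpTP, hpk, hpj⟩ := hst
  set k := st.1
  set p := st.2
  have hu : p k ∈ Sinf g := hpT k le_rfl
  obtain ⟨k', q, hk'm, hq0, hqe, hqT, hqCF, hqTP⟩ :=
    cpl g (Sinf g) (fun u hu how u' he => maxClosed g hu how he) m 0 (p k) hu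
      (resid g σ (Game.hist p k)) (hm _ hu)
  have hk'1 : 1 ≤ k' := by
    rcases Nat.eq_zero_or_pos k' with h | h
    · rw [h, TPfin_zero] at hqTP; omega
    · exact h
  set spl : ℕ → V := fun n => if n ≤ k then p n else q (n - k) with hspl
  have spl_p : ∀ i, i ≤ k → spl i = p i := fun i hi => by simp [hspl, hi]
  have spl_q : ∀ i, spl (k + i) = q i := by
    intro i
    rcases Nat.eq_zero_or_pos i with h | h
    · rw [h]; simp [hspl, hq0]
    · have : ¬ (k + i ≤ k) := by omega
      simp [hspl, this]
  have hist_spl : ∀ i, i ≤ k' → Game.hist spl (k + i) = Game.hist q i ++ Game.hist p k := by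
    intro i hi
    rw [hist_add]
    congr 1
    · exact hist_congr i (fun l hl => spl_q l)
    · exact hist_congr k (fun l hl => spl_p l (by omega))
  refine ⟨(k + k', spl), ⟨?_, ?_, ?_, ?_, ?_, ?_, ?_⟩, by omega, spl_p⟩
  · show spl 0 = v
    rw [spl_p 0 (by omega), hp0]
  · intro i hi
    show g.E (spl i) (spl (i+1))
    rcases Nat.lt_or_ge i k with h | h
    · rw [spl_p i (by omega), spl_p (i+1) (by omega)]
      exact hpe i h
    · obtain ⟨l, rfl⟩ : ∃ l, i = k + l := ⟨i - k, by omega⟩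
      rw [spl_q, show k + l + 1 = k + (l + 1) from by omega, spl_q]
      exact hqe l (by omega)
  · intro i hi
    show spl i ∈ Sinf g
    rcases le_or_gt i k with h | h
    · rw [spl_p i h]; exact hpT i h
    · obtain ⟨l, rfl⟩ : ∃ l, i = k + l := ⟨i - k, by omega⟩
      rw [spl_q]
      exact hqT l (by omega)
  · intro n hn how
    replace how : g.owner (spl n) = true := how
    show spl (n+1) = σ.next (Game.hist spl n) (spl n)
    rcases Nat.lt_or_ge n k with h | h
    · have e1 : spl n = p n := spl_p n (by omega)
      have e2 : spl (n+1) = p (n+1) := spl_p (n+1) (by omega)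
      have e3 : Game.hist spl n = Game.hist p n :=
        hist_congr n (fun l hl => spl_p l (by omega))
      rw [e1] at how
      rw [e2, e3, e1]
      exact hpCF n h how
    · obtain ⟨l, rfl⟩ : ∃ l, n = k + l := ⟨n - k, by omega⟩
      have hl : l < k' := by omega
      have e1 : spl (k + l) = q l := spl_q l
      have e2 : spl (k + l + 1) = q (l + 1) := by
        rw [show k + l + 1 = k + (l+1) from by omega]; exact spl_q (l+1)
      rw [e1] at how
      rw [e2, e1, hist_spl l (by omega)]
      have := hqCF l hl how
      rw [this]
      rfl
  · show g.TPfin spl (k + k') ≤ -((j:ℤ)+1)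
    have h1 : g.TPfin spl (k + k') = g.TPfin p k + g.TPfin q k' := by
      rw [TPfin_add]
      congr 1
      · exact TPfin_congr g (fun i hi => spl_p i hi)
      · exact TPfin_congr g (fun i hi => spl_q i)
    rw [h1]
    push_cast
    omega
  · have : (j+1) * m = j * m + m := by ring
    omega
  · omega

end Phases

end S3
namespace S3

section MPneg

open Filter

variable {V : Type} (g : Game V) [Fintype V]

lemma Sinf_MP_neg {v : V} (hv : v ∈ Sinf g) :
    ∃ c : ℝ, c < 0 ∧ ∀ σ : g.Strategy, ∃ τ : g.Strategy,
      g.MP (g.play σ τ v) ≤ (c : EReal) := by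
  obtain ⟨m, hm1, hm⟩ := exists_m g
  have hmpos0 : (0:ℝ) < (m:ℝ) := by exact_mod_cast hm1
  refine ⟨-(1/m), by have := one_div_pos.2 hmpos0; linarith, fun σ => ?_⟩
  -- iterate the phase construction
  have h0 : Good g m σ v 0 (0, fun _ => v) := by
    refine ⟨rfl, fun i hi => absurd hi (by omega), fun i hi => ?_, fun i hi => absurd hi (by omega), ?_, by omega, by omega⟩
    · exact hv
    · rw [TPfin_zero]; omega
  let F : ∀ j : ℕ, {st : ℕ × (ℕ → V) // Good g m σ v j st} :=
    Nat.rec ⟨(0, fun _ => v), h0⟩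
      (fun j prev => ⟨(phase_step g m hm1 hm σ v j prev.1 prev.2).choose,
        (phase_step g m hm1 hm σ v j prev.1 prev.2).choose_spec.1⟩)
  set K : ℕ → ℕ := fun j => (F j).1.1 with hK
  set P : ℕ → ℕ → V := fun j => (F j).1.2 with hP
  have hGood : ∀ j, Good g m σ v j (K j, P j) := fun j => (F j).2
  have hext : ∀ j, K j < K (j+1) ∧ ∀ i ≤ K j, P (j+1) i = P j i := by
    intro j
    have h := (phase_step g m hm1 hm σ v j (F j).1 (F j).2).choose_spec
    exact ⟨h.2.1, h.2.2⟩
  have hKmono : ∀ j j', j ≤ j' → K j ≤ K j' := by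
    intro j j' h
    induction j', h using Nat.le_induction with
    | base => exact le_rfl
    | succ j' hj ih => exact ih.trans (le_of_lt (hext j').1)
  have hagree : ∀ j j', j ≤ j' → ∀ i ≤ K j, P j' i = P j i := by
    intro j j' h
    induction j', h using Nat.le_induction with
    | base => intro i _; rfl
    | succ j' hj ih =>
        intro i hi
        rw [(hext j').2 i (hi.trans (hKmono j j' hj)), ih i hi]
  have hKj : ∀ j, j ≤ K j := fun j => (hGood j).2.2.2.2.2.2
  set π : ℕ → V := fun n => P n n with hπ
  have hπP : ∀ j i, i ≤ K j → π i = P j i := by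
    intro j i hi
    rcases le_or_gt i j with h | h
    · exact (hagree i j h i (hKj i)).symm
    · exact hagree j i (le_of_lt h) i hi
  have hπ0 : π 0 = v := (hGood 0).1
  have hplay : g.IsPlay π := by
    intro n
    have hK1 : n + 1 ≤ K (n+1) := hKj (n+1)
    rw [hπP (n+1) n (by omega), hπP (n+1) (n+1) (by omega)]
    exact (hGood (n+1)).2.1 n (by omega)
  have hconf : g.Conforms true σ π := by
    intro n how
    have hK1 : n + 1 ≤ K (n+1) := hKj (n+1)
    have e3 : Game.hist π n = Game.hist (P (n+1)) n :=
      hist_congr n (fun l hl => hπP (n+1) l (by omega))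
    rw [hπP (n+1) n (by omega)] at how ⊢
    rw [hπP (n+1) (n+1) (by omega), e3]
    exact (hGood (n+1)).2.2.2.1 n (by omega) how
  have hTP : ∀ j, g.TPfin π (K j) ≤ -(j:ℤ) := by
    intro j
    have h := (hGood j).2.2.2.2.1
    have e : g.TPfin π (K j) = g.TPfin (P j) (K j) :=
      TPfin_congr g (fun i hi => hπP j i hi)
    rw [e]
    exact h
  refine ⟨mimic g π, ?_⟩
  have hmp : g.play σ (mimic g π) v = π := by
    funext k
    have := mimic_play g σ π hplay hconf k
    rwa [hπ0] at this
  rw [hmp]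
  unfold Game.MP
  refine liminf_le_of_frequently_le ?_
  rw [frequently_atTop]
  intro N
  refine ⟨K (N+1), le_trans (by omega) (hKj (N+1)), ?_⟩
  have hk1 : 1 ≤ K (N+1) := le_trans (by omega) (hKj (N+1))
  have hkle : K (N+1) ≤ (N+1) * m := (hGood (N+1)).2.2.2.2.2.1
  have htp := hTP (N+1)
  show ((((g.TPfin π (K (N+1)) : ℤ):ℝ) / ((K (N+1)):ℝ) : ℝ) : EReal) ≤ ((-(1/(m:ℝ)) : ℝ) : EReal)
  rw [EReal.coe_le_coe_iff]
  have hKpos : (0:ℝ) < (K (N+1) : ℝ) := by exact_mod_cast hk1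
  have hmpos : (0:ℝ) < (m : ℝ) := by exact_mod_cast hm1
  have h1 : ((g.TPfin π (K (N+1)) : ℤ):ℝ) ≤ -(((N:ℝ))+1) := by exact_mod_cast htp
  have h2 : ((K (N+1)):ℝ) ≤ (((N:ℝ))+1) * (m:ℝ) := by exact_mod_cast hkle
  rw [div_le_iff₀ hKpos]
  have h3 : (1/(m:ℝ)) * ((K (N+1)):ℝ) ≤ ((N:ℝ))+1 := by
    rw [one_div_mul_eq_div]
    rw [div_le_iff₀ hmpos]
    linarith
  rw [neg_mul]
  linarith

end MPneg

end S3
namespace S3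

section Bounded

open Filter

variable {V : Type} (g : Game V) [Fintype V]

lemma MP_nonneg_of_bdd {v : V} (hv : v ∉ Sinf g) (τ : g.Strategy) :
    0 ≤ g.MP (g.play (sigStar g) τ v) := by
  set B : ℝ := (Fv g v : ℝ) with hB
  unfold Game.MP
  have hle : liminf (fun k : ℕ => (((-B / (k:ℝ)) : ℝ) : EReal)) atTop ≤
      liminf (fun k : ℕ => ((((g.TPfin (g.play (sigStar g) τ v) k : ℤ) : ℝ) / (k : ℝ) : ℝ) : EReal)) atTop := by
    refine liminf_le_liminf ?_
    rw [eventually_atTop]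
    refine ⟨1, fun k hk => ?_⟩
    rw [EReal.coe_le_coe_iff]
    have hkpos : (0:ℝ) < (k:ℝ) := by exact_mod_cast hk
    rw [div_le_div_iff_of_pos_right hkpos]
    have := sigStar_TPfin_lb g hv τ k
    rw [hB]
    push_cast
    exact_mod_cast by push_cast; exact this
  refine le_trans ?_ hle
  have htend : Tendsto (fun k : ℕ => (((-B / (k:ℝ)) : ℝ) : EReal)) atTop (nhds ((0:ℝ) : EReal)) :=
    EReal.tendsto_coe.2 (tendsto_const_div_atTop_nhds_zero_nat (-B))
  rw [Tendsto.liminf_eq htend, EReal.coe_zero]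

lemma MCR_lb_of_bdd (t : V) {v : V} (hv : v ∉ Sinf g) (τ : g.Strategy) :
    ((-(Fv g v : ℤ) : ℝ) : EReal) ≤ g.MCR t (g.play (sigStar g) τ v) := by
  classical
  unfold Game.MCR
  split
  · next h =>
      rw [EReal.coe_le_coe_iff]
      have := sigStar_TPfin_lb g hv τ (Nat.find h)
      exact_mod_cast this
  · exact le_top

end Bounded

end S3
namespace S3

section ValBot

open Filter

variable {V : Type} [Fintype V]

lemma ereal_lt_top_exists_int {b : EReal} (h : b < ⊤) : ∃ C : ℤ, b < ((C:ℝ):EReal) := by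
  induction b using EReal.rec with
  | bot => exact ⟨0, by simpa using EReal.bot_lt_coe 0⟩
  | coe x =>
      refine ⟨⌈x⌉ + 1, ?_⟩
      rw [EReal.coe_lt_coe_iff]
      push_cast
      linarith [Int.le_ceil x]
  | top => exact absurd h (lt_irrefl ⊤)

lemma ereal_bot_lt_exists_int {b : EReal} (h : ⊥ < b) : ∃ z : ℤ, ((z:ℝ):EReal) < b := by
  induction b using EReal.rec with
  | bot => exact absurd h (lt_irrefl ⊥)
  | coe x =>
      refine ⟨⌊x⌋ - 1, ?_⟩
      rw [EReal.coe_lt_coe_iff]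
      push_cast
      linarith [Int.floor_le x]
  | top => exact ⟨0, by simpa using EReal.coe_lt_top 0⟩

lemma val_bot (G : MCRGame V) (hnotop : ∀ u : V, G.Val u ≠ ⊤)
    {v : V} (hv : v ∈ Sinf G.toGame) : G.Val v = ⊥ := by
  classical
  set g := G.toGame with hg
  have hsup : (⨆ u : V, G.Val u) < ⊤ := by
    rw [← Finset.sup_univ_eq_iSup]
    refine (Finset.sup_lt_iff bot_lt_top).2 ?_
    intro u _
    exact lt_top_iff_ne_top.2 (hnotop u)
  obtain ⟨C, hC⟩ := ereal_lt_top_exists_int hsup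
  have hstep : ∀ (u : V) (σ' : g.Strategy),
      ∃ τ₁, g.MCR G.t (g.play σ' τ₁ u) < ((C:ℝ):EReal) := by
    intro u σ'
    refine iInf_lt_iff.1 (lt_of_le_of_lt ?_ hC)
    refine le_trans ?_ (le_iSup (fun u => G.Val u) u)
    exact le_iSup (fun σ'' : g.Strategy => g.valMax (g.MCR G.t) u σ'') σ'
  show g.lowerVal (g.MCR G.t) v = ⊥
  refine iSup_eq_bot.2 (fun σ => ?_)
  show (⨅ τ : g.Strategy, g.MCR G.t (g.play σ τ v)) = ⊥
  refine iInf_eq_bot.2 ?_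
  intro b hb
  obtain ⟨z, hz⟩ := ereal_bot_lt_exists_int hb
  suffices h : ∃ τ, g.MCR G.t (g.play σ τ v) ≤ ((z:ℝ):EReal) by
    obtain ⟨τ, hτ⟩ := h
    exact ⟨τ, lt_of_le_of_lt hτ hz⟩
  set B : ℕ := (C - z).toNat with hBdef
  obtain ⟨i, hi⟩ := hv B
  obtain ⟨k, p, hki, hp0, hpe, hpT, hpCF, hpTP⟩ :=
    cpl g Set.univ (fun u _ _ u' _ => Set.mem_univ u') i B v (Set.mem_univ v) σ hi
  set u := p k with hu
  set σ' := resid g σ (Game.hist p k) with hσ'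
  obtain ⟨τ₁, hτ₁⟩ := hstep u σ'
  set tl := g.play σ' τ₁ u with htl
  set π : ℕ → V := fun n => if n ≤ k then p n else tl (n - k) with hπdef
  have spl_p : ∀ i, i ≤ k → π i = p i := fun i hi => by simp [hπdef, hi]
  have spl_q : ∀ i, π (k + i) = tl i := by
    intro i
    rcases Nat.eq_zero_or_pos i with h | h
    · rw [h]
      have h0 : tl 0 = p k := rfl
      simp [hπdef, h0]
    · have hnk : ¬ (k + i ≤ k) := by omega
      simp [hπdef, hnk]
  have hplayπ : g.IsPlay π := by
    intro n
    rcases Nat.lt_or_ge n k with h | h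
    · rw [spl_p n (by omega), spl_p (n+1) (by omega)]
      exact hpe n h
    · obtain ⟨l, rfl⟩ : ∃ l, n = k + l := ⟨n - k, by omega⟩
      rw [spl_q l, show k + l + 1 = k + (l+1) from by omega, spl_q (l+1)]
      exact play_isPlay g σ' τ₁ u l
  have hist_π : ∀ l, Game.hist π (k + l) = Game.hist tl l ++ Game.hist p k := by
    intro l
    rw [hist_add]
    congr 1
    · exact hist_congr l (fun i hi => spl_q i)
    · exact hist_congr k (fun i hi => spl_p i (by omega))
  have hconfπ : g.Conforms true σ π := by
    intro n how
    rcases Nat.lt_or_ge n k with h | h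
    · have e1 : π n = p n := spl_p n (by omega)
      have e3 : Game.hist π n = Game.hist p n :=
        hist_congr n (fun l hl => spl_p l (by omega))
      rw [e1] at how
      rw [spl_p (n+1) (by omega), e3, e1]
      exact hpCF n h how
    · obtain ⟨l, rfl⟩ : ∃ l, n = k + l := ⟨n - k, by omega⟩
      have e1 : π (k + l) = tl l := spl_q l
      rw [e1] at how
      rw [show k + l + 1 = k + (l+1) from by omega, spl_q (l+1), hist_π l, e1]
      have hc := play_conf_max g σ' τ₁ u l how
      rw [← htl] at hc
      rw [hc]
      rfl
  have hπ0 : π 0 = v := by rw [spl_p 0 (by omega), hp0]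
  refine ⟨mimic g π, ?_⟩
  have hmpl : g.play σ (mimic g π) v = π := by
    funext n
    have hmm := mimic_play g σ π hplayπ hconfπ n
    rwa [hπ0] at hmm
  rw [hmpl]
  have hhit : ∃ j, tl j = G.t := by
    by_contra hno
    unfold Game.MCR at hτ₁
    rw [dif_neg hno] at hτ₁
    exact not_top_lt hτ₁
  have htlTP : g.TPfin tl (Nat.find hhit) ≤ C - 1 := by
    unfold Game.MCR at hτ₁
    rw [dif_pos hhit] at hτ₁
    rw [EReal.coe_lt_coe_iff] at hτ₁
    exact_mod_cast Int.le_sub_one_of_lt (by exact_mod_cast hτ₁)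
  have hπt : π (k + Nat.find hhit) = G.t := by
    rw [spl_q (Nat.find hhit)]
    exact Nat.find_spec hhit
  have hπhit : ∃ n, π n = G.t := ⟨k + Nat.find hhit, hπt⟩
  have hMCReq : g.MCR G.t π = (((g.TPfin π (Nat.find hπhit) : ℤ) : ℝ) : EReal) := by
    unfold Game.MCR
    rw [dif_pos hπhit]
  have hfind_le : Nat.find hπhit ≤ k + Nat.find hhit := Nat.find_min' hπhit hπt
  have habs : g.TPfin π (k + Nat.find hhit) = g.TPfin π (Nat.find hπhit) :=
    TPfin_absorb g π hplayπ G.loopOnly G.loopZero (Nat.find_spec hπhit)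
      (k + Nat.find hhit) hfind_le
  have hsum : g.TPfin π (k + Nat.find hhit) = g.TPfin p k + g.TPfin tl (Nat.find hhit) := by
    rw [TPfin_add]
    congr 1
    · exact TPfin_congr g (fun i hi => spl_p i hi)
    · exact TPfin_congr g (fun i hi => spl_q i)
  rw [hMCReq, ← habs, hsum, EReal.coe_le_coe_iff]
  have hBz : (C - z : ℤ) ≤ (B : ℤ) := by
    rw [hBdef]
    exact Int.self_le_toNat _
  have hfin : g.TPfin p k + g.TPfin tl (Nat.find hhit) ≤ z := by omega
  exact_mod_cast hfin

end ValBot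

end S3
/-- if every vertex of an MCR game `G` has value `≠ +∞`, then a vertex has
value `−∞` in `G` iff it has negative value in the mean-payoff game `G'` played on the
same weighted graph. -/
theorem statement_3 {V : Type} [Fintype V] (G : MCRGame V)
    (hnotop : ∀ v : V, G.Val v ≠ ⊤) (v : V) :
    G.Val v = ⊥ ↔ G.toGame.lowerVal G.toGame.MP v < 0 := by
  classical
  set g := G.toGame with hg
  by_cases hv : v ∈ S3.Sinf g
  · constructor
    · intro _
      obtain ⟨c, hc0, hforce⟩ := S3.Sinf_MP_neg g hv
      refine lt_of_le_of_lt ?_ (show ((c:ℝ):EReal) < 0 from by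
        rw [← EReal.coe_zero]; exact EReal.coe_lt_coe_iff.2 hc0)
      refine iSup_le (fun σ => ?_)
      obtain ⟨τ, hτ⟩ := hforce σ
      exact le_trans (iInf_le (fun τ => g.MP (g.play σ τ v)) τ) hτ
    · intro _
      exact S3.val_bot G hnotop hv
  · constructor
    · intro hbot
      exfalso
      have h1 : ((-(S3.Fv g v : ℤ) : ℝ) : EReal) ≤ G.Val v := by
        refine le_trans ?_ (le_iSup (fun σ => g.valMax (g.MCR G.t) v σ) (S3.sigStar g))
        refine le_iInf (fun τ => ?_)
        exact S3.MCR_lb_of_bdd g G.t hv τ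
      rw [hbot] at h1
      exact EReal.coe_ne_bot _ (le_bot_iff.1 h1)
    · intro hneg
      have h2 : (0 : EReal) ≤ g.lowerVal g.MP v := by
        refine le_trans ?_ (le_iSup (fun σ => g.valMax g.MP v σ) (S3.sigStar g))
        refine le_iInf (fun τ => ?_)
        exact S3.MP_nonneg_of_bdd g hv τ
      exact absurd hneg (not_lt.2 h2)
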